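/- Let f : S² × ℝ → S² × ℝ be a geodesic-preserving bijection. Then f preserves the classes of geodesics: the image under f of every horizontal geodesic is a horizontal geodesic, the image of every vertical geodesic is a vertical geodesic, and the image of every slant geodesic is a slant geodesic. -/

import Mathlib

open scoped RealInnerProductSpace

/-- Euclidean 3-space. -/
abbrev E3 : Type := EuclideanSpace ℝ (Fin 3)

/-- The unit sphere `S² ⊆ ℝ³`. -/
abbrev S2 : Type := Metric.sphere (0 : E3) 1

/-- A geodesic of `S² × ℝ`: a set of the form
`{(cos(α t) • u + sin(α t) • v, β t + c) | t ∈ ℝ}` where `u, v ∈ S²` are orthogonal,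
`c ∈ ℝ`, and `(α, β) ≠ (0, 0)`. -/
def IsSphGeodesic (G : Set (S2 × ℝ)) : Prop :=
  ∃ (u v : S2) (α β c : ℝ), ⟪(u : E3), (v : E3)⟫ = 0 ∧ (α, β) ≠ ((0 : ℝ), (0 : ℝ)) ∧
    G = {q : S2 × ℝ | ∃ t : ℝ,
      (q.1 : E3) = Real.cos (α * t) • (u : E3) + Real.sin (α * t) • (v : E3) ∧
      q.2 = β * t + c}

/-- A geodesic of `S² × ℝ` is horizontal if it is contained in `S² × {r}` for some `r`. -/
def IsHorizontalSphGeodesic (G : Set (S2 × ℝ)) : Prop :=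
  IsSphGeodesic G ∧ ∃ r : ℝ, G ⊆ {q : S2 × ℝ | q.2 = r}

/-- A geodesic of `S² × ℝ` is vertical if it equals `{p} × ℝ` for some `p ∈ S²`. -/
def IsVerticalSphGeodesic (G : Set (S2 × ℝ)) : Prop :=
  IsSphGeodesic G ∧ ∃ p : S2, G = {q : S2 × ℝ | q.1 = p}

/-- A geodesic of `S² × ℝ` is slant if it is neither horizontal nor vertical. -/
def IsSlantSphGeodesic (G : Set (S2 × ℝ)) : Prop :=
  IsSphGeodesic G ∧ ¬ IsHorizontalSphGeodesic G ∧ ¬ IsVerticalSphGeodesic G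

namespace SphAux

/-- norm-1 membership helper -/
lemma mem_S2 {x : E3} (h : ‖x‖ = 1) : x ∈ Metric.sphere (0:E3) 1 := by
  simpa [mem_sphere_iff_norm] using h

lemma norm_S2 (x : S2) : ‖(x : E3)‖ = 1 := by
  have := x.2; simpa [mem_sphere_iff_norm] using this

/-- the circle parametrization -/
noncomputable def Pt (p w : E3) (θ : ℝ) : E3 := Real.cos θ • p + Real.sin θ • w

/-- orthonormality of a frame -/
def ON (p w : E3) : Prop := ‖p‖ = 1 ∧ ‖w‖ = 1 ∧ ⟪p, w⟫ = 0

lemma ON.inner_pp {p w : E3} (h : ON p w) : ⟪p, p⟫ = 1 := by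
  rw [real_inner_self_eq_norm_sq, h.1]; norm_num

lemma ON.inner_ww {p w : E3} (h : ON p w) : ⟪w, w⟫ = 1 := by
  rw [real_inner_self_eq_norm_sq, h.2.1]; norm_num

lemma ON.inner_wp {p w : E3} (h : ON p w) : ⟪w, p⟫ = 0 := by
  rw [real_inner_comm]; exact h.2.2

lemma inner_Pt_p {p w : E3} (h : ON p w) (θ : ℝ) : ⟪Pt p w θ, p⟫ = Real.cos θ := by
  rw [Pt, inner_add_left, real_inner_smul_left, real_inner_smul_left, h.inner_pp, h.inner_wp]
  ring

lemma inner_Pt_w {p w : E3} (h : ON p w) (θ : ℝ) : ⟪Pt p w θ, w⟫ = Real.sin θ := by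
  rw [Pt, inner_add_left, real_inner_smul_left, real_inner_smul_left, h.inner_ww, h.2.2]
  ring

lemma norm_Pt {p w : E3} (h : ON p w) (θ : ℝ) : ‖Pt p w θ‖ = 1 := by
  have h2 : ‖Pt p w θ‖^2 = 1 := by
    rw [← real_inner_self_eq_norm_sq]
    have : ⟪Pt p w θ, Pt p w θ⟫
        = Real.cos θ * ⟪Pt p w θ, p⟫ + Real.sin θ * ⟪Pt p w θ, w⟫ := by
      nth_rewrite 2 [Pt]
      rw [inner_add_right, real_inner_smul_right, real_inner_smul_right]
    rw [this, inner_Pt_p h, inner_Pt_w h, ← Real.cos_sq_add_sin_sq θ]; ring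
  nlinarith [norm_nonneg (Pt p w θ), h2]

lemma Pt_zero {p w : E3} : Pt p w 0 = p := by simp [Pt]

lemma Pt_pi {p w : E3} : Pt p w Real.pi = -p := by simp [Pt]

lemma Pt_pi_div_two {p w : E3} : Pt p w (Real.pi/2) = w := by simp [Pt]

lemma Pt_add_pi {p w : E3} (θ : ℝ) : Pt p w (θ + Real.pi) = - Pt p w θ := by
  simp only [Pt, Real.cos_add, Real.sin_add, Real.cos_pi, Real.sin_pi]
  module

lemma Pt_add_two_pi {p w : E3} (θ : ℝ) : Pt p w (θ + 2*Real.pi) = Pt p w θ := by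
  simp [Pt, Real.cos_add_two_pi, Real.sin_add_two_pi]

lemma Pt_add_int_mul_two_pi {p w : E3} (θ : ℝ) (m : ℤ) :
    Pt p w (θ + m*(2*Real.pi)) = Pt p w θ := by
  have c : Real.cos (θ + m*(2*Real.pi)) = Real.cos θ := by
    simpa [mul_comm] using Real.cos_add_int_mul_two_pi θ m
  have s : Real.sin (θ + m*(2*Real.pi)) = Real.sin θ := by
    simpa [mul_comm] using Real.sin_add_int_mul_two_pi θ m
  simp [Pt, c, s]

/-- key injectivity: equal circle points differ by a multiple of 2π -/
lemma Pt_inj {p w : E3} (h : ON p w) {θ θ' : ℝ} (he : Pt p w θ = Pt p w θ') :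
    ∃ m : ℤ, θ' = θ + m*(2*Real.pi) := by
  have hc : Real.cos θ = Real.cos θ' := by
    rw [← inner_Pt_p h θ, ← inner_Pt_p h θ', he]
  have hs : Real.sin θ = Real.sin θ' := by
    rw [← inner_Pt_w h θ, ← inner_Pt_w h θ', he]
  have : Real.cos (θ' - θ) = 1 := by
    rw [Real.cos_sub, ← hc, ← hs]
    rw [← Real.cos_sq_add_sin_sq θ]; ring
  obtain ⟨n, hn⟩ := (Real.cos_eq_one_iff _).mp this
  exact ⟨n, by linarith⟩

/-- a unit vector is not its own negative -/
lemma ne_neg_self {x : E3} (h : ‖x‖ = 1) : x ≠ -x := by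
  intro he
  have h0 : x + x = 0 := by nth_rewrite 2 [he]; simp
  have h2 : (2:ℝ) • x = 0 := by rw [two_smul]; exact h0
  have : x = 0 := by
    rcases smul_eq_zero.mp h2 with h3 | h3
    · norm_num at h3
    · exact h3
  rw [this] at h; simp at h

/-- existence of an angle with given cos/sin -/
lemma exists_angle {a b : ℝ} (h : a^2 + b^2 = 1) : ∃ φ : ℝ, Real.cos φ = a ∧ Real.sin φ = b := by
  have ha1 : -1 ≤ a := by nlinarith
  have ha2 : a ≤ 1 := by nlinarith
  rcases le_or_gt 0 b with hb | hb
  · refine ⟨Real.arccos a, Real.cos_arccos ha1 ha2, ?_⟩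
    rw [Real.sin_arccos]
    rw [show 1 - a^2 = b^2 by linarith, Real.sqrt_sq hb]
  · refine ⟨-Real.arccos a, by rw [Real.cos_neg]; exact Real.cos_arccos ha1 ha2, ?_⟩
    rw [Real.sin_neg, Real.sin_arccos]
    rw [show 1 - a^2 = b^2 by linarith, Real.sqrt_sq_eq_abs, abs_of_neg hb]; ring

end SphAux

namespace SphAux

/-- helix set (k=0 : horizontal circle; k≠0 : slant helix) -/
def HelS (p w : E3) (k c : ℝ) : Set (S2 × ℝ) :=
  {q | ∃ θ : ℝ, (q.1 : E3) = Pt p w θ ∧ q.2 = k * θ + c}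

/-- vertical line set -/
def VertS (p : E3) : Set (S2 × ℝ) := {q | (q.1 : E3) = p}

lemma mem_HelS {p w : E3} {k c : ℝ} {q : S2 × ℝ} :
    q ∈ HelS p w k c ↔ ∃ θ : ℝ, (q.1 : E3) = Pt p w θ ∧ q.2 = k * θ + c := Iff.rfl

lemma mem_VertS {p : E3} {q : S2 × ℝ} : q ∈ VertS p ↔ (q.1 : E3) = p := Iff.rfl

/-- existence of a unit vector orthogonal to two given vectors -/
lemma ortho2 (p w : E3) : ∃ v : E3, ‖v‖ = 1 ∧ ⟪p, v⟫ = 0 ∧ ⟪w, v⟫ = 0 := by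
  set M : Submodule ℝ E3 := Submodule.span ℝ {p, w} with hM
  have hne : Mᗮ ≠ ⊥ := by
    intro hbot
    have htop : M = ⊤ := by
      have := Submodule.orthogonal_orthogonal M
      rw [hbot] at this
      simpa [Submodule.bot_orthogonal_eq_top] using this.symm
    have h3 : Module.finrank ℝ E3 = 3 := by
      simpa using finrank_euclideanSpace_fin (𝕜 := ℝ) (n := 3)
    have hle : Module.finrank ℝ M ≤ 2 := by
      classical
      have h1 := finrank_span_le_card (R := ℝ) (M := E3) ({p, w} : Set E3)
      have h2 : ({p, w} : Set E3).toFinset.card ≤ 2 := by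
        rw [Set.toFinset_insert, Set.toFinset_singleton]
        exact (Finset.card_insert_le _ _).trans (by simp)
      rw [hM]
      exact h1.trans h2
    rw [htop, finrank_top, h3] at hle
    omega
  obtain ⟨z, hz, hz0⟩ := Submodule.exists_mem_ne_zero_of_ne_bot hne
  refine ⟨‖z‖⁻¹ • z, ?_, ?_, ?_⟩
  · rw [norm_smul]; simp [norm_ne_zero_iff.mpr hz0]
  · rw [real_inner_smul_right]
    have hp : p ∈ M := Submodule.subset_span (by simp)
    rw [Submodule.inner_right_of_mem_orthogonal hp hz]; ring
  · rw [real_inner_smul_right]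
    have hw : w ∈ M := Submodule.subset_span (by simp)
    rw [Submodule.inner_right_of_mem_orthogonal hw hz]; ring

/-- every helix with orthonormal frame is a geodesic -/
lemma helS_isGeodesic {p w : E3} (h : ON p w) (k c : ℝ) : IsSphGeodesic (HelS p w k c) := by
  refine ⟨⟨p, mem_S2 h.1⟩, ⟨w, mem_S2 h.2.1⟩, 1, k, c, h.2.2, by simp, ?_⟩
  ext q
  simp only [mem_HelS, Set.mem_setOf_eq, one_mul]
  rfl

/-- every vertical line is a geodesic -/
lemma vertS_isGeodesic {p : E3} (h : ‖p‖ = 1) : IsSphGeodesic (VertS p) := by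
  obtain ⟨v, hv1, hv2, _⟩ := ortho2 p 0
  refine ⟨⟨p, mem_S2 h⟩, ⟨v, mem_S2 hv1⟩, 0, 1, 0, hv2, by simp, ?_⟩
  ext q
  simp only [mem_VertS, Set.mem_setOf_eq, zero_mul, Real.cos_zero, Real.sin_zero, one_smul,
    zero_smul, add_zero, one_mul]
  constructor
  · intro hq; exact ⟨q.2, hq, rfl⟩
  · rintro ⟨t, h1, _⟩; exact h1

/-- normal form of geodesics -/
lemma normal_form {G : Set (S2 × ℝ)} (hG : IsSphGeodesic G) :
    (∃ p w k c, ON p w ∧ G = HelS p w k c) ∨ (∃ p : E3, ‖p‖ = 1 ∧ G = VertS p) := by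
  obtain ⟨u, v, α, β, c, huv, hab, hGeq⟩ := hG
  rcases eq_or_ne α 0 with ha | ha
  · right
    refine ⟨u, norm_S2 u, ?_⟩
    have hb : β ≠ 0 := by
      intro hb; exact hab (by rw [ha, hb])
    rw [hGeq]; ext q
    simp only [Set.mem_setOf_eq, mem_VertS, ha, zero_mul, Real.cos_zero, Real.sin_zero,
      one_smul, zero_smul, add_zero]
    constructor
    · rintro ⟨t, h1, _⟩; exact h1
    · intro h1; exact ⟨(q.2 - c)/β, h1, by field_simp; ring⟩
  · left
    refine ⟨u, v, β/α, c, ⟨norm_S2 u, norm_S2 v, huv⟩, ?_⟩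
    rw [hGeq]; ext q
    simp only [Set.mem_setOf_eq, mem_HelS, Pt]
    constructor
    · rintro ⟨t, h1, h2⟩
      exact ⟨α * t, h1, by rw [h2]; field_simp⟩
    · rintro ⟨θ, h1, h2⟩
      exact ⟨θ/α, by rw [mul_div_cancel₀ _ ha]; exact h1, by rw [h2]; field_simp⟩

end SphAux

namespace SphAux

/-- point of a helix at parameter θ -/
noncomputable def helPt {p w : E3} (h : ON p w) (k c θ : ℝ) : S2 × ℝ :=
  (⟨Pt p w θ, mem_S2 (norm_Pt h θ)⟩, k * θ + c)

lemma helPt_mem {p w : E3} (h : ON p w) (k c θ : ℝ) : helPt h k c θ ∈ HelS p w k c :=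
  ⟨θ, rfl, rfl⟩

/-- vertical lines are infinite -/
lemma vertS_infinite {p : E3} (h : ‖p‖ = 1) : (VertS p).Infinite := by
  apply Set.infinite_of_injective_forall_mem
    (f := fun r : ℝ => ((⟨p, mem_S2 h⟩ : S2), r))
  · intro a b hab
    simpa using congrArg Prod.snd hab
  · intro r; exact rfl

/-- helices are infinite -/
lemma helS_infinite {p w : E3} (h : ON p w) (k c : ℝ) : (HelS p w k c).Infinite := by
  rcases eq_or_ne k 0 with hk | hk
  · apply Set.infinite_of_injective_forall_mem
      (f := fun n : ℕ => helPt h k c (1/(n+1)))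
    · intro a b hab
      have h1 : Pt p w (1/(a+1)) = Pt p w (1/(b+1)) := by
        have := congrArg (fun z => ((z.1 : S2) : E3)) hab
        simpa [helPt] using this
      obtain ⟨m, hm⟩ := Pt_inj h h1
      have hpi := Real.pi_gt_three
      have ha0 : (0:ℝ) < 1/((a:ℝ)+1) := by positivity
      have hb0 : (0:ℝ) < 1/((b:ℝ)+1) := by positivity
      have ha1 : 1/((a:ℝ)+1) ≤ 1 := by
        rw [div_le_one (by positivity)]; simp
      have hb1 : 1/((b:ℝ)+1) ≤ 1 := by
        rw [div_le_one (by positivity)]; simp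
      have hm0 : m = 0 := by
        by_contra hm0
        have h1le : (1:ℝ) ≤ |(m:ℝ)| := by
          have : (1:ℤ) ≤ |m| := by
            rcases lt_trichotomy m 0 with hcase | hcase | hcase
            · rw [abs_of_neg hcase]; omega
            · exact absurd hcase hm0
            · rw [abs_of_pos hcase]; omega
          calc (1:ℝ) = ((1:ℤ):ℝ) := by norm_num
            _ ≤ ((|m|:ℤ):ℝ) := by exact_mod_cast this
            _ = |(m:ℝ)| := Int.cast_abs
        have : |1/((b:ℝ)+1) - 1/((a:ℝ)+1)| = |(m:ℝ)| * (2*Real.pi) := by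
          rw [hm]; rw [show (1/((a:ℝ)+1) + m*(2*Real.pi)) - 1/((a:ℝ)+1) = m*(2*Real.pi) by ring]
          rw [abs_mul]
          congr 1
          rw [abs_of_pos (by positivity)]
        have hlt : |1/((b:ℝ)+1) - 1/((a:ℝ)+1)| < 1 := by
          rw [abs_sub_lt_iff]; constructor <;> nlinarith
        nlinarith [abs_nonneg ((m:ℝ))]
      have hm' : 1/((b:ℝ)+1) = 1/((a:ℝ)+1) := by
        rw [hm0] at hm; simpa using hm
      have : (a:ℝ) = (b:ℝ) := by
        have ha' : ((a:ℝ)+1) ≠ 0 := by positivity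
        have hb' : ((b:ℝ)+1) ≠ 0 := by positivity
        field_simp at hm'
        first
        | exact_mod_cast hm'
        | linarith
      exact_mod_cast this
    · intro n; exact helPt_mem h k c _
  · apply Set.infinite_of_injective_forall_mem (f := fun n : ℕ => helPt h k c n)
    · intro a b hab
      have := congrArg Prod.snd hab
      simp only [helPt] at this
      have : (a:ℝ) = b := by
        have := mul_left_cancel₀ hk (by linarith : k * (a:ℝ) = k * b)
        exact this
      exact_mod_cast this
    · intro n; exact helPt_mem h k c _

/-- two points of a slant helix at the same height are equal -/
lemma helS_height_inj {p w : E3} {k c : ℝ} (hk : k ≠ 0) {q q' : S2 × ℝ}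
    (hq : q ∈ HelS p w k c) (hq' : q' ∈ HelS p w k c) (h2 : q.2 = q'.2) : q = q' := by
  obtain ⟨θ, h1, hh⟩ := hq
  obtain ⟨θ', h1', hh'⟩ := hq'
  have : θ = θ' := by
    rw [hh, hh'] at h2
    have := mul_left_cancel₀ hk (by linarith : k * θ = k * θ')
    exact this
  apply Prod.ext
  · exact Subtype.ext (by rw [h1, h1', this])
  · exact h2

/-- horizontal helices lie in a level -/
lemma helS_level {p w : E3} {c : ℝ} {q : S2 × ℝ} (hq : q ∈ HelS p w 0 c) : q.2 = c := by
  obtain ⟨θ, _, hh⟩ := hq; rw [hh]; ring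

/-- cylinder lemma: two helices on the same circle with different slopes
intersect in an infinite set -/
lemma cylinder_infinite {p w : E3} (h : ON p w) {k₁ k₂ c₁ c₂ : ℝ}
    (hk₁ : k₁ ≠ 0) (hk₂ : k₂ ≠ 0) (hne : k₁ ≠ k₂) :
    (HelS p w k₁ c₁ ∩ HelS p w k₂ c₂).Infinite := by
  set θf : ℤ → ℝ := fun a => (c₂ - c₁ + 2*Real.pi*a*k₂)/(k₁ - k₂) with hθf
  have hd : k₁ - k₂ ≠ 0 := sub_ne_zero.mpr hne
  apply Set.infinite_of_injective_forall_mem (f := fun a : ℤ => helPt h k₁ c₁ (θf a))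
  · intro a b hab
    have := congrArg Prod.snd hab
    simp only [helPt] at this
    have h1 : θf a = θf b := by
      exact mul_left_cancel₀ hk₁ (by linarith)
    rw [hθf] at h1
    simp only at h1
    rw [div_eq_div_iff hd hd] at h1
    have h3 : 2*Real.pi*(a:ℝ)*k₂ = 2*Real.pi*(b:ℝ)*k₂ := by
      have := mul_right_cancel₀ hd h1
      linarith
    have h4 : (a:ℝ) = b := by
      have h2pi : (2*Real.pi) ≠ 0 := by positivity
      have h5 : 2*Real.pi*(a:ℝ) = 2*Real.pi*(b:ℝ) :=
        mul_right_cancel₀ hk₂ h3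
      exact mul_left_cancel₀ h2pi h5
    exact_mod_cast h4
  · intro a
    refine ⟨helPt_mem h k₁ c₁ _, ⟨θf a + a*(2*Real.pi), ?_, ?_⟩⟩
    · show Pt p w (θf a) = _
      rw [Pt_add_int_mul_two_pi]
    · show k₁ * (θf a) + c₁ = k₂ * (θf a + a*(2*Real.pi)) + c₂
      rw [hθf]
      field_simp
      ring

/-- same slope same frame through a common point: equal sets -/
lemma helS_same_slope {p w : E3} (h : ON p w) {k c₁ c₂ : ℝ} {x : S2 × ℝ}
    (h₁ : x ∈ HelS p w k c₁) (h₂ : x ∈ HelS p w k c₂) : HelS p w k c₁ = HelS p w k c₂ := by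
  obtain ⟨θ₁, e1, f1⟩ := h₁
  obtain ⟨θ₂, e2, f2⟩ := h₂
  obtain ⟨m, hm⟩ := Pt_inj h (e1.symm.trans e2)
  have hc : c₂ = c₁ - k*(m*(2*Real.pi)) := by
    have : k * θ₁ + c₁ = k * θ₂ + c₂ := by rw [← f1, ← f2]
    rw [hm] at this
    linarith [this]
  ext q
  constructor
  · rintro ⟨θ, e, f⟩
    exact ⟨θ + m*(2*Real.pi), by rw [Pt_add_int_mul_two_pi]; exact e, by rw [f, hc]; ring⟩
  · rintro ⟨θ, e, f⟩
    refine ⟨θ + ((-m : ℤ) : ℝ)*(2*Real.pi), ?_, by rw [f, hc]; push_cast; ring⟩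
    rw [Pt_add_int_mul_two_pi]
    exact e

end SphAux

namespace SphAux

/-- the antipodal involution on S² × ℝ -/
def sig (z : S2 × ℝ) : S2 × ℝ :=
  (⟨-(z.1 : E3), mem_S2 (by rw [norm_neg]; exact norm_S2 z.1)⟩, z.2)

lemma sig_sig (z : S2 × ℝ) : sig (sig z) = z := by
  apply Prod.ext
  · exact Subtype.ext (by simp [sig])
  · rfl

lemma sig_ne (z : S2 × ℝ) : sig z ≠ z := by
  intro he
  have h1 : -(z.1 : E3) = (z.1 : E3) := by
    have := congrArg (fun q => (q.1 : E3)) he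
    simpa [sig] using this
  exact ne_neg_self (norm_S2 z.1) h1.symm

lemma sig_fst (z : S2 × ℝ) : ((sig z).1 : E3) = -(z.1 : E3) := rfl
lemma sig_snd (z : S2 × ℝ) : (sig z).2 = z.2 := rfl

/-- σ of a helix is a helix on the same circle, shifted phase -/
lemma sig_image_helS {p w : E3} (h : ON p w) (k c : ℝ) :
    sig '' HelS p w k c = HelS p w k (c - k * Real.pi) := by
  ext q
  constructor
  · rintro ⟨z, ⟨θ, e, f⟩, rfl⟩
    refine ⟨θ + Real.pi, ?_, ?_⟩
    · rw [sig_fst, e, Pt_add_pi]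
    · rw [sig_snd, f]; ring
  · rintro ⟨θ, e, f⟩
    refine ⟨sig q, ⟨θ - Real.pi, ?_, ?_⟩, sig_sig q⟩
    · rw [sig_fst, e]
      rw [show θ = (θ - Real.pi) + Real.pi by ring, Pt_add_pi]
      simp
    · rw [sig_snd, f]; ring

/-- base points of helix members lie in the span of the frame -/
lemma base_mem_span {p w : E3} {k c : ℝ} {q : S2 × ℝ} (hq : q ∈ HelS p w k c) :
    (q.1 : E3) ∈ Submodule.span ℝ {p, w} := by
  obtain ⟨θ, e, _⟩ := hq
  rw [e, Pt]
  exact Submodule.add_mem _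
    (Submodule.smul_mem _ _ (Submodule.subset_span (by simp)))
    (Submodule.smul_mem _ _ (Submodule.subset_span (by simp)))

/-- if two unit, non-equal, non-antipodal vectors lie in span{p,w}, then
span{p,w} ⊆ span of the two vectors — coefficient extraction version:
any vector of span{p',w'} containing both lies in span{p,w}. -/
lemma span_twist {p w : E3} (hON : ON p w) {x y : E3}
    (hx1 : ‖x‖ = 1) (hy1 : ‖y‖ = 1) (hxy : x ≠ y) (hxy' : x ≠ -y)
    (hx : x ∈ Submodule.span ℝ {p, w}) (hy : y ∈ Submodule.span ℝ {p, w}) :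
    p ∈ Submodule.span ℝ {x, y} ∧ w ∈ Submodule.span ℝ {x, y} := by
  obtain ⟨a, b, hab⟩ := Submodule.mem_span_pair.mp hx
  obtain ⟨c, d, hcd⟩ := Submodule.mem_span_pair.mp hy
  -- key: D := a*d - c*b ≠ 0
  have hDp : d • x - b • y = (a*d - c*b) • p := by
    rw [← hab, ← hcd]; module
  have hDw : a • y - c • x = (a*d - c*b) • w := by
    rw [← hab, ← hcd]; module
  have hD : a*d - c*b ≠ 0 := by
    intro hD0
    rw [hD0, zero_smul] at hDp hDw
    -- d • x = b • y and a • y = c • x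
    have h1 : d • x = b • y := by
      have := sub_eq_zero.mp hDp; exact this
    have h2 : a • y = c • x := by
      have := sub_eq_zero.mp hDw; exact this
    -- norms: |d| = |b|, |a| = |c|
    have hnd : |d| = |b| := by
      have := congrArg norm h1
      rw [norm_smul, norm_smul, hx1, hy1] at this
      simpa using this
    rcases eq_or_ne b 0 with hb | hb
    · have hd0 : d = 0 := by rw [hb] at hnd; simpa using hnd
      -- then x = a • p with |a| = 1... and y = c • p with |c| = 1 → x = ± y
      have hxp : x = a • p := by rw [← hab, hb]; module
      have hyp : y = c • p := by
        rcases eq_or_ne c 0 with hc | hc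
        · exfalso
          have : y = d • w := by rw [← hcd, hc]; module
          rw [hd0] at this
          simp at this
          rw [this] at hy1; simp at hy1
        · rw [← hcd]
          have : b * c = 0 := by rw [hb]; ring
          -- from h2 : a • y = c • x with x = a•p
          -- direct: d = 0 so y = c•p + d•w = c•p
          rw [hd0]; module
      have hna : |a| = 1 := by
        have := congrArg norm hxp
        rw [norm_smul, hON.1, hx1] at this
        simpa using this.symm
      have hnc : |c| = 1 := by
        have := congrArg norm hyp
        rw [norm_smul, hON.1, hy1] at this
        simpa using this.symm
      -- x = ±y
      rcases abs_eq (by norm_num : (0:ℝ) ≤ 1) |>.mp hna with ha1 | ha1 <;>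
        rcases abs_eq (by norm_num : (0:ℝ) ≤ 1) |>.mp hnc with hc1 | hc1
      · exact hxy (by rw [hxp, hyp, ha1, hc1]; try module)
      · exact hxy' (by rw [hxp, hyp, ha1, hc1]; try module)
      · exact hxy' (by rw [hxp, hyp, ha1, hc1]; try module)
      · exact hxy (by rw [hxp, hyp, ha1, hc1]; try module)
    · -- b ≠ 0 : y = (d/b) • x with |d/b| = 1 → x = ±y
      have hd0 : d ≠ 0 := by
        intro hd0; rw [hd0] at hnd; simp at hnd; exact hb (by simpa using hnd.symm)
      have hyx : y = (b⁻¹ * d) • x := by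
        have h3 := congrArg (fun z => b⁻¹ • z) h1
        simp only [smul_smul] at h3
        rw [inv_mul_cancel₀ hb, one_smul] at h3
        exact h3.symm
      have habs : |b⁻¹ * d| = 1 := by
        have h4 := congrArg norm hyx
        rw [norm_smul, hx1, hy1, Real.norm_eq_abs] at h4
        simpa using h4.symm
      rcases abs_eq (by norm_num : (0:ℝ) ≤ 1) |>.mp habs with h' | h'
      · rw [h', one_smul] at hyx; exact hxy hyx.symm
      · rw [h'] at hyx; exact hxy' (by rw [hyx]; module)
  have hpkey : p = (a*d-c*b)⁻¹ • ((a*d-c*b) • p) := by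
    rw [smul_smul, inv_mul_cancel₀ hD, one_smul]
  have hwkey : w = (a*d-c*b)⁻¹ • ((a*d-c*b) • w) := by
    rw [smul_smul, inv_mul_cancel₀ hD, one_smul]
  constructor
  · rw [Submodule.mem_span_pair]
    refine ⟨(a*d-c*b)⁻¹ * d, -((a*d-c*b)⁻¹ * b), ?_⟩
    rw [hpkey, ← hDp]; module
  · rw [Submodule.mem_span_pair]
    refine ⟨-((a*d-c*b)⁻¹ * c), (a*d-c*b)⁻¹ * a, ?_⟩
    rw [hwkey, ← hDw]; module

end SphAux

namespace SphAux

/-- expansion of inner products for vectors expressed in an orthonormal frame -/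
lemma inner_comb {p w : E3} (h : ON p w) (a b a' b' : ℝ) :
    ⟪a • p + b • w, a' • p + b' • w⟫ = a*a' + b*b' := by
  rw [inner_add_left, inner_add_right, inner_add_right, real_inner_smul_left,
    real_inner_smul_left, real_inner_smul_left, real_inner_smul_left,
    real_inner_smul_right, real_inner_smul_right, real_inner_smul_right,
    real_inner_smul_right, h.inner_pp, h.inner_ww, h.inner_wp, h.2.2]
  ring

/-- reframing: a helix whose frame lies in the span of another orthonormal frame
can be re-expressed in the latter frame, with slope up to sign -/
lemma reframe {p w p' w' : E3} (hON : ON p w) (hON' : ON p' w')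
    (hp' : p' ∈ Submodule.span ℝ {p, w}) (hw' : w' ∈ Submodule.span ℝ {p, w}) :
    ∃ s φ : ℝ, (s = 1 ∨ s = -1) ∧
      ∀ k c : ℝ, HelS p' w' k c = HelS p w (s*k) (c - s*k*φ) := by
  obtain ⟨a, b, hab⟩ := Submodule.mem_span_pair.mp hp'
  obtain ⟨a', b', hab'⟩ := Submodule.mem_span_pair.mp hw'
  have n1 : a^2 + b^2 = 1 := by
    have := inner_comb hON a b a b
    rw [hab, hON'.inner_pp] at this
    nlinarith [this]
  have n2 : a'^2 + b'^2 = 1 := by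
    have := inner_comb hON a' b' a' b'
    rw [hab', hON'.inner_ww] at this
    nlinarith [this]
  have n3 : a*a' + b*b' = 0 := by
    have := inner_comb hON a b a' b'
    rw [hab, hab', hON'.2.2] at this
    linarith [this]
  set s := a*b' - b*a' with hs
  have hs2 : s^2 = 1 := by
    have : s^2 = (a^2+b^2)*(a'^2+b'^2) - (a*a'+b*b')^2 := by rw [hs]; ring
    rw [this, n1, n2, n3]; ring
  have ha' : a' = -s*b := by
    have : a' = a'*(a^2+b^2) := by rw [n1]; ring
    rw [this, hs]; linear_combination a * n3
  have hb' : b' = s*a := by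
    have : b' = b'*(a^2+b^2) := by rw [n1]; ring
    rw [this, hs]; linear_combination b * n3
  obtain ⟨φ, hφc, hφs⟩ := exists_angle n1
  have hsor : s = 1 ∨ s = -1 := sq_eq_one_iff.mp hs2
  have hPt : ∀ θ, Pt p' w' θ = Pt p w (φ + s*θ) := by
    intro θ
    rw [Pt, Pt, ← hab, ← hab', ha', hb', Real.cos_add, Real.sin_add, hφc, hφs]
    rcases hsor with h1 | h1 <;> rw [h1]
    · rw [show Real.cos ((1:ℝ)*θ) = Real.cos θ by norm_num,
        show Real.sin ((1:ℝ)*θ) = Real.sin θ by norm_num]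
      module
    · rw [show Real.cos ((-1:ℝ)*θ) = Real.cos θ by rw [neg_one_mul, Real.cos_neg],
        show Real.sin ((-1:ℝ)*θ) = -Real.sin θ by rw [neg_one_mul, Real.sin_neg]]
      module
  refine ⟨s, φ, hsor, fun k c => ?_⟩
  have hss : s * s = 1 := by nlinarith [hs2]
  ext q
  constructor
  · rintro ⟨θ, e, f⟩
    refine ⟨φ + s*θ, by rw [e, hPt], ?_⟩
    rw [f]
    first
    | linear_combination (k*θ) * hss
    | linear_combination (-(k*θ)) * hss
  · rintro ⟨ψ, e, f⟩
    refine ⟨s*(ψ - φ), ?_, ?_⟩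
    · rw [hPt, show φ + s*(s*(ψ-φ)) = φ + (s*s)*(ψ-φ) by ring, hss]
      rw [show φ + 1*(ψ-φ) = ψ by ring]
      exact e
    · rw [f]; ring
end SphAux

namespace SphAux

lemma hel_line_mem {p w : E3} {k c : ℝ} {q : S2 × ℝ} (hq : q ∈ HelS p w k c) (j : ℤ) :
    ((q.1, q.2 + k*(j*(2*Real.pi))) : S2 × ℝ) ∈ HelS p w k c := by
  obtain ⟨θ, e, f⟩ := hq
  exact ⟨θ + j*(2*Real.pi), by rw [Pt_add_int_mul_two_pi]; exact e, by rw [f]; push_cast; ring⟩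

lemma hel_line_mem_anti {p w : E3} {k c : ℝ} {q : S2 × ℝ} (hq : q ∈ HelS p w k c) (j : ℤ) :
    (((sig q).1, q.2 + k*(Real.pi + j*(2*Real.pi))) : S2 × ℝ) ∈ HelS p w k c := by
  obtain ⟨θ, e, f⟩ := hq
  refine ⟨(θ + Real.pi) + j*(2*Real.pi), ?_, by rw [f]; push_cast; ring⟩
  rw [Pt_add_int_mul_two_pi, Pt_add_pi, sig_fst, e]

lemma hel_ret {p w : E3} (h : ON p w) {k c : ℝ} {q q' : S2 × ℝ}
    (hq : q ∈ HelS p w k c) (hq' : q' ∈ HelS p w k c)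
    (hbase : (q'.1 : E3) = (q.1 : E3)) :
    ∃ m : ℤ, q'.2 = q.2 + k*(m*(2*Real.pi)) := by
  obtain ⟨θ, e, f⟩ := hq
  obtain ⟨θ', e', f'⟩ := hq'
  obtain ⟨m, hm⟩ := Pt_inj h (e.symm.trans (hbase ▸ e'.symm).symm)
  exact ⟨m, by rw [f, f', hm]; ring⟩

lemma hel_ret_anti {p w : E3} (h : ON p w) {k c : ℝ} {q q' : S2 × ℝ}
    (hq : q ∈ HelS p w k c) (hq' : q' ∈ HelS p w k c)
    (hbase : (q'.1 : E3) = -(q.1 : E3)) :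
    ∃ m : ℤ, q'.2 = q.2 + k*(Real.pi + m*(2*Real.pi)) := by
  obtain ⟨θ, e, f⟩ := hq
  obtain ⟨θ', e', f'⟩ := hq'
  have : Pt p w (θ + Real.pi) = Pt p w θ' := by
    rw [Pt_add_pi, ← e, ← e', hbase]
  obtain ⟨m, hm⟩ := Pt_inj h this
  exact ⟨m, by rw [f, f', hm]; ring⟩

/-- mixed vertical/helix with two common points: infinite intersection -/
lemma vert_hel_infinite {p'' p w : E3} (h : ON p w) {k c : ℝ} {x y : S2 × ℝ}
    (hxG : x ∈ VertS p'') (hxH : x ∈ HelS p w k c)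
    (hyG : y ∈ VertS p'') (hyH : y ∈ HelS p w k c) (hxy : x ≠ y) :
    (VertS p'' ∩ HelS p w k c).Infinite := by
  have hbase : (x.1 : E3) = (y.1 : E3) := by rw [hxG, hyG]
  have hx2 : x.2 ≠ y.2 := by
    intro h2
    exact hxy (Prod.ext (Subtype.ext hbase) h2)
  have hk : k ≠ 0 := by
    intro hk0
    rw [hk0] at hxH hyH
    exact hx2 ((helS_level hxH).trans (helS_level hyH).symm)
  apply Set.infinite_of_injective_forall_mem
    (f := fun j : ℤ => ((x.1, x.2 + k*(j*(2*Real.pi))) : S2 × ℝ))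
  · intro a b hab
    have := congrArg Prod.snd hab
    simp only at this
    have h2pi : (2*Real.pi) ≠ 0 := by positivity
    have : (a:ℝ) = b := by
      have h3 : k*((a:ℝ)*(2*Real.pi)) = k*((b:ℝ)*(2*Real.pi)) := by linarith
      have h4 := mul_left_cancel₀ hk h3
      exact mul_right_cancel₀ h2pi h4
    exact_mod_cast this
  · intro j
    exact ⟨hxG, hel_line_mem hxH j⟩

/-- THE classification lemma: two geodesics meeting in a finite set containing
two distinct points: the points are antipodal at the same level -/
lemma fin2_class {G H : Set (S2 × ℝ)} (hG : IsSphGeodesic G) (hH : IsSphGeodesic H)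
    {x y : S2 × ℝ} (hxG : x ∈ G) (hxH : x ∈ H) (hyG : y ∈ G) (hyH : y ∈ H)
    (hxy : x ≠ y) (hfin : (G ∩ H).Finite) :
    (y.1 : E3) = -(x.1 : E3) ∧ y.2 = x.2 := by
  rcases normal_form hG with ⟨p, w, k₁, c₁, h1, rfl⟩ | ⟨p, hp, rfl⟩
  · rcases normal_form hH with ⟨p', w', k₂, c₂, h2, rfl⟩ | ⟨p', hp', rfl⟩
    · -- helix ∩ helix
      rcases eq_or_ne (x.1 : E3) (y.1 : E3) with hbe | hbne
      · -- same base: impossible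
        exfalso
        have hx2 : x.2 ≠ y.2 := fun h2 => hxy (Prod.ext (Subtype.ext hbe) h2)
        have hk₁ : k₁ ≠ 0 := by
          intro hk0; rw [hk0] at hxG hyG
          exact hx2 ((helS_level hxG).trans (helS_level hyG).symm)
        have hk₂ : k₂ ≠ 0 := by
          intro hk0; rw [hk0] at hxH hyH
          exact hx2 ((helS_level hxH).trans (helS_level hyH).symm)
        obtain ⟨m, hm⟩ := hel_ret h1 hxG hyG hbe.symm
        obtain ⟨n, hn⟩ := hel_ret h2 hxH hyH hbe.symm
        set Δ := y.2 - x.2 with hΔ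
        have hΔ0 : Δ ≠ 0 := sub_ne_zero.mpr (Ne.symm hx2)
        refine absurd hfin (Set.infinite_of_injective_forall_mem
          (f := fun j : ℤ => ((x.1, x.2 + Δ*j) : S2 × ℝ)) ?_ ?_)
        · intro a b hab
          have := congrArg Prod.snd hab
          simp only at this
          have : (a:ℝ) = b := mul_left_cancel₀ hΔ0 (by linarith)
          exact_mod_cast this
        · intro j
          constructor
          · have := hel_line_mem hxG (m*j)
            have he : x.2 + k₁*((m*j : ℤ)*(2*Real.pi)) = x.2 + Δ*j := by
              rw [hΔ, hm]; push_cast; ring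
            rwa [he] at this
          · have := hel_line_mem hxH (n*j)
            have he : x.2 + k₂*((n*j : ℤ)*(2*Real.pi)) = x.2 + Δ*j := by
              rw [hΔ, hn]; push_cast; ring
            rwa [he] at this
      rcases eq_or_ne (y.1 : E3) (-(x.1 : E3)) with hbe | hbne'
      · -- antipodal bases
        refine ⟨hbe, ?_⟩
        -- show same level, else infinite intersection
        rcases eq_or_ne k₁ 0 with hk₁ | hk₁
        · rcases eq_or_ne k₂ 0 with hk₂ | hk₂
          · rw [hk₁] at hxG hyG
            exact (helS_level hyG).trans (helS_level hxG).symm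
          · exfalso
            rw [hk₁] at hxG hyG
            have hxy2 : y.2 = x.2 := (helS_level hyG).trans (helS_level hxG).symm
            obtain ⟨m, hm⟩ := hel_ret_anti h2 hxH hyH hbe
            have hne : Real.pi + m*(2*Real.pi) ≠ 0 := by
              have : Real.pi + (m:ℝ)*(2*Real.pi) = ((2*m+1 : ℤ):ℝ)*Real.pi := by
                push_cast; ring
              rw [this]
              apply mul_ne_zero _ Real.pi_ne_zero
              simp only [ne_eq, Int.cast_eq_zero]
              intro hh
              have : (2*m+1 : ℤ) ≠ 0 := by omega
              exact this (by exact_mod_cast hh)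
            have : k₂ * (Real.pi + m*(2*Real.pi)) = 0 := by
              linarith [hxy2, hm]
            rcases mul_eq_zero.mp this with h' | h'
            · exact hk₂ h'
            · exact hne h'
        · rcases eq_or_ne k₂ 0 with hk₂ | hk₂
          · exfalso
            rw [hk₂] at hxH hyH
            have hxy2 : y.2 = x.2 := (helS_level hyH).trans (helS_level hxH).symm
            obtain ⟨m, hm⟩ := hel_ret_anti h1 hxG hyG hbe
            have hne : Real.pi + m*(2*Real.pi) ≠ 0 := by
              have : Real.pi + (m:ℝ)*(2*Real.pi) = ((2*m+1 : ℤ):ℝ)*Real.pi := by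
                push_cast; ring
              rw [this]
              apply mul_ne_zero _ Real.pi_ne_zero
              simp only [ne_eq, Int.cast_eq_zero]
              intro hh
              have : (2*m+1 : ℤ) ≠ 0 := by omega
              exact this (by exact_mod_cast hh)
            have : k₁ * (Real.pi + m*(2*Real.pi)) = 0 := by linarith [hxy2, hm]
            rcases mul_eq_zero.mp this with h' | h'
            · exact hk₁ h'
            · exact hne h'
          · -- both slant, antipodal bases: infinite intersection, contradiction
            exfalso
            obtain ⟨m, hm⟩ := hel_ret_anti h1 hxG hyG hbe
            obtain ⟨n, hn⟩ := hel_ret_anti h2 hxH hyH hbe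
            set Δ := y.2 - x.2 with hΔ
            have hoddm : Δ = k₁*(((2*m+1 : ℤ):ℝ))*Real.pi := by
              rw [hΔ, hm]; push_cast; ring
            have hoddn : Δ = k₂*(((2*n+1 : ℤ):ℝ))*Real.pi := by
              rw [hΔ, hn]; push_cast; ring
            have hΔ0 : Δ ≠ 0 := by
              rw [hoddm]
              apply mul_ne_zero _ Real.pi_ne_zero
              apply mul_ne_zero hk₁
              simp only [ne_eq, Int.cast_eq_zero]
              intro hh
              have : (2*m+1 : ℤ) ≠ 0 := by omega
              exact this (by exact_mod_cast hh)
            refine absurd hfin (Set.infinite_of_injective_forall_mem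
              (f := fun j : ℤ => ((x.1, x.2 + 2*Δ*j) : S2 × ℝ)) ?_ ?_)
            · intro a b hab
              have := congrArg Prod.snd hab
              simp only at this
              have : (a:ℝ) = b := by
                have h3 : 2*Δ*(a:ℝ) = 2*Δ*b := by linarith
                have h4 : (2*Δ) ≠ 0 := by
                  intro hz; exact hΔ0 (by linarith [hz])
                exact mul_left_cancel₀ h4 h3
              exact_mod_cast this
            · intro j
              constructor
              · have := hel_line_mem hxG ((2*m+1)*j)
                have he : x.2 + k₁*(((2*m+1)*j : ℤ)*(2*Real.pi)) = x.2 + 2*Δ*j := by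
                  rw [hoddm]; push_cast; ring
                rwa [he] at this
              · -- via y and antipodal returns in H
                have := hel_line_mem_anti hyH ((2*n+1)*j - n - 1)
                have hb2 : ((sig y).1 : E3) = (x.1 : E3) := by
                  rw [sig_fst, hbe]; simp
                have he : y.2 + k₂*(Real.pi + (((2*n+1)*j - n - 1 : ℤ))*(2*Real.pi))
                    = x.2 + 2*Δ*j := by
                  have hy2 : y.2 = x.2 + Δ := by rw [hΔ]; ring
                  rw [hy2, hoddn]; push_cast; ring
                rw [he] at this
                have hfst : ((sig y).1 : S2) = x.1 := Subtype.ext hb2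
                rwa [hfst] at this
      · -- bases independent : same circle, all cases infinite
        exfalso
        have hux : ‖(x.1 : E3)‖ = 1 := norm_S2 x.1
        have huy : ‖(y.1 : E3)‖ = 1 := norm_S2 y.1
        have hyx : (x.1 : E3) ≠ (y.1 : E3) := hbne
        have hyx' : (x.1 : E3) ≠ -(y.1 : E3) := by
          intro hc
          apply hbne'
          rw [hc]; simp
        -- x,y bases in span{p,w} and span{p',w'}
        have hxs : (x.1 : E3) ∈ Submodule.span ℝ {p, w} := base_mem_span hxG
        have hys : (y.1 : E3) ∈ Submodule.span ℝ {p, w} := base_mem_span hyG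
        have hxs' : (x.1 : E3) ∈ Submodule.span ℝ {p', w'} := base_mem_span hxH
        have hys' : (y.1 : E3) ∈ Submodule.span ℝ {p', w'} := base_mem_span hyH
        obtain ⟨hp'm, hw'm⟩ := span_twist h2 hux huy hyx hyx' hxs' hys'
        have hsub : Submodule.span ℝ {(x.1 : E3), (y.1 : E3)} ≤ Submodule.span ℝ {p, w} := by
          rw [Submodule.span_le]
          intro z hz
          rcases hz with hz | hz
          · rw [hz]; exact hxs
          · rw [Set.mem_singleton_iff.mp hz]; exact hys
        obtain ⟨s, φ, hs, hre⟩ := reframe h1 h2 (hsub hp'm) (hsub hw'm)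
        rw [hre k₂ c₂] at hxH hyH hfin
        set k₂' := s * k₂ with hk2'
        set c₂' := c₂ - s*k₂*φ with hc2'
        rcases eq_or_ne k₁ 0 with hk₁ | hk₁
        · rcases eq_or_ne k₂' 0 with hk₂ | hk₂
          · -- both horizontal on same circle → equal sets
            rw [hk₁] at hxG hfin
            rw [hk₂] at hxH hfin
            have hc : c₂' = c₁ := (helS_level hxH).symm.trans (helS_level hxG)
            rw [hc] at hfin
            rw [Set.inter_self] at hfin
            exact (helS_infinite h1 0 c₁) hfin
          · rw [hk₁] at hxG hyG
            have : x.2 = y.2 := (helS_level hxG).trans (helS_level hyG).symm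
            exact hxy (helS_height_inj hk₂ hxH hyH this)
        · rcases eq_or_ne k₂' 0 with hk₂ | hk₂
          · rw [hk₂] at hxH hyH
            have : x.2 = y.2 := (helS_level hxH).trans (helS_level hyH).symm
            exact hxy (helS_height_inj hk₁ hxG hyG this)
          · rcases eq_or_ne k₁ k₂' with hkk | hkk
            · rw [← hkk] at hxH hfin
              have := helS_same_slope h1 hxG hxH
              rw [← this, Set.inter_self] at hfin
              exact (helS_infinite h1 k₁ c₁) hfin
            · exact (cylinder_infinite h1 hk₁ hk₂ hkk) hfin
    · -- helix ∩ vertical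
      exfalso
      rw [Set.inter_comm] at hfin
      exact (vert_hel_infinite h1 hxH hxG hyH hyG hxy) hfin
  · rcases normal_form hH with ⟨p', w', k₂, c₂, h2, rfl⟩ | ⟨p', hp', rfl⟩
    · -- vertical ∩ helix
      exfalso
      exact (vert_hel_infinite h2 hxG hxH hyG hyH hxy) hfin
    · -- vertical ∩ vertical
      exfalso
      have : p = p' := by rw [← hxG, ← hxH]
      rw [← this] at hfin
      rw [Set.inter_self] at hfin
      exact (vertS_infinite hp) hfin

end SphAux

namespace SphAux

lemma inner_Pt_any {p w v : E3} (θ : ℝ) :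
    ⟪Pt p w θ, v⟫ = Real.cos θ * ⟪p, v⟫ + Real.sin θ * ⟪w, v⟫ := by
  rw [Pt, inner_add_left, real_inner_smul_left, real_inner_smul_left]

/-- a frame: given a point of S², two orthogonal circles through it -/
lemma frame_of (pS : S2) : ∃ w₁ w₂ : E3, ON (pS : E3) w₁ ∧ ON (pS : E3) w₂ ∧
    ⟪w₁, w₂⟫ = 0 := by
  obtain ⟨w₁, hw1, hw1p, _⟩ := ortho2 (pS : E3) 0
  obtain ⟨w₂, hw2, hw2p, hw2w1⟩ := ortho2 (pS : E3) w₁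
  exact ⟨w₁, w₂, ⟨norm_S2 pS, hw1, hw1p⟩, ⟨norm_S2 pS, hw2, hw2p⟩, hw2w1⟩

/-- membership at angle 0 / 2π for explicitly based points -/
lemma mem_hel_base {pS : S2} {w : E3} (k c : ℝ) :
    ((pS, c) : S2 × ℝ) ∈ HelS (pS : E3) w k c :=
  ⟨0, by rw [Pt_zero], by ring⟩

lemma mem_hel_base_two_pi {pS : S2} {w : E3} (k c : ℝ) :
    ((pS, k*(2*Real.pi) + c) : S2 × ℝ) ∈ HelS (pS : E3) w k c :=
  ⟨2*Real.pi, by rw [show (2*Real.pi) = 0 + 2*Real.pi by ring, Pt_add_two_pi, Pt_zero], rfl⟩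

lemma mem_hel_antibase {pS : S2} {w : E3} (k c : ℝ) :
    ((sig ((pS, c) : S2 × ℝ)).1, k*Real.pi + c) ∈ HelS (pS : E3) w k c :=
  ⟨Real.pi, by rw [sig_fst, Pt_pi], rfl⟩

/-- the two-circles-through-x-and-its-antipode configuration forces membership
in the pair -/
lemma two_circle_inter {pS : S2} {w₁ w₂ : E3} (h1 : ON (pS:E3) w₁) (h2 : ON (pS:E3) w₂)
    (hw : ⟪w₁, w₂⟫ = 0) {k₁ k₂ : ℝ} {c₁ c₂ : ℝ} {q : S2 × ℝ}
    (hq1 : q ∈ HelS (pS:E3) w₁ k₁ c₁) (hq2 : q ∈ HelS (pS:E3) w₂ k₂ c₂) :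
    (q.1 : E3) = (pS : E3) ∨ (q.1 : E3) = -(pS : E3) := by
  obtain ⟨θ, e, _⟩ := hq1
  obtain ⟨θ', e', _⟩ := hq2
  have hsin : Real.sin θ = 0 := by
    have hh := congrArg (fun z => ⟪z, w₁⟫) (e.symm.trans e')
    have hw' : ⟪w₂, w₁⟫ = 0 := by rw [real_inner_comm]; exact hw
    rw [inner_Pt_any, inner_Pt_any, h1.inner_ww, h1.2.2, hw'] at hh
    simpa using hh
  have hcos : Real.cos θ = 1 ∨ Real.cos θ = -1 := by
    have := Real.sin_sq_add_cos_sq θ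
    rw [hsin] at this
    have h2 : Real.cos θ ^ 2 = 1 := by linarith
    exact sq_eq_one_iff.mp h2
  rcases hcos with hc | hc
  · left; rw [e, Pt, hsin, hc]; simp
  · right; rw [e, Pt, hsin, hc]; simp

/-- distinctness of the two circles -/
lemma two_circle_ne {pS : S2} {w₁ w₂ : E3} (h1 : ON (pS:E3) w₁) (h2 : ON (pS:E3) w₂)
    (hw : ⟪w₁, w₂⟫ = 0) (k₁ k₂ c₁ c₂ : ℝ) :
    HelS (pS:E3) w₁ k₁ c₁ ≠ HelS (pS:E3) w₂ k₂ c₂ := by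
  intro he
  have hmem : ((⟨w₁, mem_S2 h1.2.1⟩ : S2), k₁*(Real.pi/2) + c₁) ∈ HelS (pS:E3) w₁ k₁ c₁ :=
    ⟨Real.pi/2, by rw [Pt_pi_div_two], rfl⟩
  rw [he] at hmem
  obtain ⟨θ', e', _⟩ := hmem
  have : (1:ℝ) = 0 := by
    have hw' : ⟪w₂, w₁⟫ = 0 := by rw [real_inner_comm]; exact hw
    have hh := congrArg (fun z => ⟪z, w₁⟫) e'
    simp only at hh
    rw [inner_Pt_any, h1.2.2, hw', real_inner_self_eq_norm_sq, h1.2.1] at hh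
    simpa using hh
  norm_num at this

/-- the two horizontal witnesses through a point and its antipode -/
lemma horiz_pair_witness (z : S2 × ℝ) :
    ∃ H₁ H₂ : Set (S2 × ℝ), IsSphGeodesic H₁ ∧ IsSphGeodesic H₂ ∧
      z ∈ H₁ ∧ z ∈ H₂ ∧ sig z ∈ H₁ ∧ sig z ∈ H₂ ∧ H₁ ∩ H₂ = {z, sig z} := by
  obtain ⟨w₁, w₂, h1, h2, hw⟩ := frame_of z.1
  refine ⟨HelS (z.1 : E3) w₁ 0 z.2, HelS (z.1 : E3) w₂ 0 z.2,
    helS_isGeodesic h1 0 z.2, helS_isGeodesic h2 0 z.2, ?_, ?_, ?_, ?_, ?_⟩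
  · exact ⟨0, by rw [Pt_zero], by ring⟩
  · exact ⟨0, by rw [Pt_zero], by ring⟩
  · exact ⟨Real.pi, by rw [sig_fst, Pt_pi], by rw [sig_snd]; ring⟩
  · exact ⟨Real.pi, by rw [sig_fst, Pt_pi], by rw [sig_snd]; ring⟩
  · ext q
    constructor
    · rintro ⟨hq1, hq2⟩
      have hlev : q.2 = z.2 := helS_level hq1
      rcases two_circle_inter h1 h2 hw hq1 hq2 with hb | hb
      · left; exact Prod.ext (Subtype.ext hb) hlev
      · right
        apply Prod.ext (Subtype.ext (by rw [hb, sig_fst])) (by rw [hlev, sig_snd])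
    · rintro (rfl | hq)
      · exact ⟨⟨0, by rw [Pt_zero], by ring⟩, ⟨0, by rw [Pt_zero], by ring⟩⟩
      · rw [Set.mem_singleton_iff.mp hq]
        exact ⟨⟨Real.pi, by rw [sig_fst, Pt_pi], by rw [sig_snd]; ring⟩,
          ⟨Real.pi, by rw [sig_fst, Pt_pi], by rw [sig_snd]; ring⟩⟩

/-- the two slant witnesses through two points of a vertical line -/
lemma vert_pair_witness (pS : S2) {a b : ℝ} (hab : a ≠ b) :
    ∃ G₁ G₂ : Set (S2 × ℝ), IsSphGeodesic G₁ ∧ IsSphGeodesic G₂ ∧ G₁ ≠ G₂ ∧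
      ((pS, a) : S2 × ℝ) ∈ G₁ ∧ ((pS, a) : S2 × ℝ) ∈ G₂ ∧
      ((pS, b) : S2 × ℝ) ∈ G₁ ∧ ((pS, b) : S2 × ℝ) ∈ G₂ ∧
      G₁ ∩ (sig '' G₂) = ∅ := by
  obtain ⟨w₁, w₂, h1, h2, hw⟩ := frame_of pS
  set s := (b - a)/(2*Real.pi) with hs
  have h2pi : (2*Real.pi) ≠ 0 := by positivity
  have hs0 : s ≠ 0 := div_ne_zero (sub_ne_zero.mpr (Ne.symm hab)) h2pi
  have hsb : s*(2*Real.pi) + a = b := by rw [hs]; field_simp; ring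
  refine ⟨HelS (pS : E3) w₁ s a, HelS (pS : E3) w₂ s a,
    helS_isGeodesic h1 s a, helS_isGeodesic h2 s a,
    two_circle_ne h1 h2 hw s s a a, mem_hel_base s a, mem_hel_base s a, ?_, ?_, ?_⟩
  · have := mem_hel_base_two_pi (pS := pS) (w := w₁) s a
    rwa [hsb] at this
  · have := mem_hel_base_two_pi (pS := pS) (w := w₂) s a
    rwa [hsb] at this
  · rw [sig_image_helS h2]
    ext q
    simp only [Set.mem_inter_iff, Set.mem_empty_iff_false, iff_false]
    rintro ⟨⟨θ, e, f⟩, ⟨θ', e', f'⟩⟩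
    -- sin θ = 0, sin θ' = 0, cos θ = cos θ', heights force θ' = θ + π
    have hsin : Real.sin θ = 0 := by
      have hh := congrArg (fun z => ⟪z, w₁⟫) (e.symm.trans e')
      have hw' : ⟪w₂, w₁⟫ = 0 := by rw [real_inner_comm]; exact hw
      rw [inner_Pt_any, inner_Pt_any, h1.inner_ww, h1.2.2, hw'] at hh
      simpa using hh
    have hsin' : Real.sin θ' = 0 := by
      have hh := congrArg (fun z => ⟪z, w₂⟫) (e.symm.trans e')
      rw [inner_Pt_any, inner_Pt_any, h2.inner_ww, h2.2.2, hw] at hh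
      simpa using hh.symm
    have hcos : Real.cos θ = Real.cos θ' := by
      have hh := congrArg (fun z => ⟪z, (pS : E3)⟫) (e.symm.trans e')
      have e1 : ⟪(pS:E3), (pS:E3)⟫ = 1 := h1.inner_pp
      rw [inner_Pt_any, inner_Pt_any, e1, h1.inner_wp, h2.inner_wp] at hh
      simpa using hh
    have hθ' : θ' = θ + Real.pi := by
      have : s*θ + a = s*θ' + (a - s*Real.pi) := by rw [← f, ← f']
      have h3 : s*(θ' - θ - Real.pi) = 0 := by linarith
      rcases mul_eq_zero.mp h3 with h' | h'
      · exact absurd h' hs0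
      · linarith
    rw [hθ', Real.cos_add] at hcos
    simp only [Real.cos_pi, Real.sin_pi] at hcos
    have hcos0 : Real.cos θ = 0 := by nlinarith [hcos]
    have := Real.sin_sq_add_cos_sq θ
    rw [hsin, hcos0] at this
    norm_num at this

end SphAux

namespace SphAux

/-- L9: two distinct geodesics through two common points, with K₁ disjoint from σK₂:
the two points have equal or antipodal bases -/
lemma sba_class {K₁ K₂ : Set (S2 × ℝ)} (h₁ : IsSphGeodesic K₁) (h₂ : IsSphGeodesic K₂)
    {x y : S2 × ℝ} (hx1 : x ∈ K₁) (hy1 : y ∈ K₁) (hx2 : x ∈ K₂) (hy2 : y ∈ K₂)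
    (hxy : x ≠ y) (hne : K₁ ≠ K₂) (hdisj : K₁ ∩ (sig '' K₂) = ∅) :
    (y.1 : E3) = (x.1 : E3) ∨ (y.1 : E3) = -(x.1 : E3) := by
  by_contra hcon
  push_neg at hcon
  obtain ⟨hb1, hb2⟩ := hcon
  rcases normal_form h₁ with ⟨p, w, k₁, c₁, hON1, rfl⟩ | ⟨p, hp, rfl⟩
  swap
  · exact hb1 ((mem_VertS.mp hy1).trans (mem_VertS.mp hx1).symm)
  rcases normal_form h₂ with ⟨p', w', k₂, c₂, hON2, rfl⟩ | ⟨p', hp', rfl⟩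
  swap
  · exact hb1 ((mem_VertS.mp hy2).trans (mem_VertS.mp hx2).symm)
  -- both helices; bases independent ⇒ same plane, reframe
  have hux : ‖(x.1 : E3)‖ = 1 := norm_S2 x.1
  have huy : ‖(y.1 : E3)‖ = 1 := norm_S2 y.1
  have hyx : (x.1 : E3) ≠ (y.1 : E3) := fun h => hb1 h.symm
  have hyx' : (x.1 : E3) ≠ -(y.1 : E3) := by
    intro hc; exact hb2 (by rw [hc]; simp)
  obtain ⟨hp'm, hw'm⟩ := span_twist hON2 hux huy hyx hyx'
    (base_mem_span hx2) (base_mem_span hy2)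
  have hsub : Submodule.span ℝ {(x.1 : E3), (y.1 : E3)} ≤ Submodule.span ℝ {p, w} := by
    rw [Submodule.span_le]
    intro z hz
    rcases hz with hz | hz
    · rw [hz]; exact base_mem_span hx1
    · rw [Set.mem_singleton_iff.mp hz]; exact base_mem_span hy1
  obtain ⟨s, φ, hs, hre⟩ := reframe hON1 hON2 (hsub hp'm) (hsub hw'm)
  rw [hre k₂ c₂] at hx2 hy2 hne hdisj
  set k₂' := s * k₂ with hk2'
  set c₂' := c₂ - s*k₂*φ with hc2'
  rw [sig_image_helS hON1] at hdisj
  rcases eq_or_ne k₁ 0 with hk₁ | hk₁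
  · rw [hk₁] at hx1 hy1 hne
    have hlev : x.2 = y.2 := (helS_level hx1).trans (helS_level hy1).symm
    rcases eq_or_ne k₂' 0 with hk₂ | hk₂
    · rw [hk₂] at hx2 hne
      have hc : c₂' = c₁ := (helS_level hx2).symm.trans (helS_level hx1)
      exact hne (by rw [hc])
    · exact hxy (helS_height_inj hk₂ hx2 hy2 hlev)
  · rcases eq_or_ne k₂' 0 with hk₂ | hk₂
    · rw [hk₂] at hx2 hy2
      have hlev : x.2 = y.2 := (helS_level hx2).trans (helS_level hy2).symm
      exact hxy (helS_height_inj hk₁ hx1 hy1 hlev)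
    · rcases eq_or_ne k₁ k₂' with hkk | hkk
      · rw [← hkk] at hx2 hne
        exact hne (helS_same_slope hON1 hx1 hx2)
      · have := cylinder_infinite hON1 hk₁ hk₂ hkk (c₁ := c₁) (c₂ := c₂' - k₂' * Real.pi)
        obtain ⟨q, hq⟩ := this.nonempty
        rw [hdisj] at hq
        exact hq

/-- every horizontal geodesic contains an antipodal pair -/
lemma horiz_antipair {G : Set (S2 × ℝ)} (hG : IsSphGeodesic G) {r : ℝ}
    (hsub : G ⊆ {q : S2 × ℝ | q.2 = r}) : ∃ z, z ∈ G ∧ sig z ∈ G := by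
  rcases normal_form hG with ⟨p, w, k, c, h, rfl⟩ | ⟨p, hp, rfl⟩
  · have hc : c = r := by
      have := hsub (helPt_mem h k c 0)
      simpa [helPt] using this
    have hk : k = 0 := by
      have h1 : k*1 + c = r := by
        have := hsub (helPt_mem h k c 1)
        simpa [helPt] using this
      linarith [hc, h1]
    refine ⟨helPt h k c 0, helPt_mem h k c 0, ⟨Real.pi, ?_, ?_⟩⟩
    · rw [sig_fst]
      show -(Pt p w 0 : E3) = Pt p w Real.pi
      rw [Pt_zero, Pt_pi]
    · rw [sig_snd]
      show k*0 + c = k*Real.pi + c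
      rw [hk]; ring
  · exfalso
    have h1 : ((⟨p, mem_S2 hp⟩ : S2), r) ∈ VertS p := rfl
    have h2 : ((⟨p, mem_S2 hp⟩ : S2), r+1) ∈ VertS p := rfl
    have := hsub h1
    have h4 := hsub h2
    simp only [Set.mem_setOf_eq] at this h4
    linarith

/-- a geodesic containing an antipodal pair is contained in a level -/
lemma antipair_level {K : Set (S2 × ℝ)} (hK : IsSphGeodesic K) {y : S2 × ℝ}
    (hy : y ∈ K) (hsy : sig y ∈ K) : K ⊆ {q : S2 × ℝ | q.2 = y.2} := by
  rcases normal_form hK with ⟨p, w, k, c, h, rfl⟩ | ⟨p, hp, rfl⟩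
  · rcases eq_or_ne k 0 with hk | hk
    · rw [hk] at hy ⊢
      intro q hq
      have := helS_level hq
      simp only [Set.mem_setOf_eq]
      rw [this, ← helS_level hy]
    · exfalso
      have := helS_height_inj hk hsy hy (sig_snd y)
      exact sig_ne y this
  · exfalso
    have h1 : (y.1 : E3) = p := hy
    have h2 : -(y.1 : E3) = p := hsy
    exact ne_neg_self (norm_S2 y.1) (h1.trans h2.symm)

/-- a geodesic whose base points lie in {B, -B} is a vertical line -/
lemma two_lines_vert {K : Set (S2 × ℝ)} (hK : IsSphGeodesic K) {B : E3}
    (hall : ∀ q ∈ K, (q.1 : E3) = B ∨ (q.1 : E3) = -B) :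
    ∃ p : S2, K = {q : S2 × ℝ | q.1 = p} := by
  rcases normal_form hK with ⟨p, w, k, c, h, rfl⟩ | ⟨p, hp, rfl⟩
  · exfalso
    have m0 := hall _ (helPt_mem h k c 0)
    have m1 := hall _ (helPt_mem h k c (Real.pi/2))
    simp only [helPt] at m0 m1
    rw [Pt_zero] at m0
    rw [Pt_pi_div_two] at m1
    have habs : ⟪p, w⟫ = 1 ∨ ⟪p, w⟫ = -1 := by
      rcases m0 with h0 | h0 <;> rcases m1 with h1 | h1
      · left; rw [show w = p from h1.trans h0.symm, h.inner_pp]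
      · right
        rw [show w = -p by rw [h1, ← h0], inner_neg_right, h.inner_pp]
      · right
        rw [show w = -p by rw [h1, h0]; simp, inner_neg_right, h.inner_pp]
      · left
        rw [show w = p from h1.trans h0.symm, h.inner_pp]
    rcases habs with h' | h' <;> rw [h.2.2] at h' <;> norm_num at h'
  · refine ⟨⟨p, mem_S2 hp⟩, ?_⟩
    ext q
    simp only [mem_VertS, Set.mem_setOf_eq]
    constructor
    · intro hq; exact Subtype.ext hq
    · intro hq; rw [hq]

/-- the given vertical-set form agrees with VertS -/
lemma vert_set_eq (pS : S2) : {q : S2 × ℝ | q.1 = pS} = VertS (pS : E3) := by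
  ext q
  simp only [Set.mem_setOf_eq, mem_VertS]
  exact ⟨fun h => by rw [h], fun h => Subtype.ext h⟩

end SphAux

open SphAux in
/-- A geodesic-preserving bijection of `S² × ℝ` preserves the classes of geodesics:
horizontal, vertical, and slant. -/
theorem sphere_times_real_geodesic_classes_preserved
    (f : S2 × ℝ → S2 × ℝ)
    (hbij : Function.Bijective f)
    (hgeo : ∀ G : Set (S2 × ℝ), IsSphGeodesic G → IsSphGeodesic (f '' G)) :
    (∀ G : Set (S2 × ℝ), IsHorizontalSphGeodesic G → IsHorizontalSphGeodesic (f '' G)) ∧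
    (∀ G : Set (S2 × ℝ), IsVerticalSphGeodesic G → IsVerticalSphGeodesic (f '' G)) ∧
    (∀ G : Set (S2 × ℝ), IsSlantSphGeodesic G → IsSlantSphGeodesic (f '' G)) := by

  obtain ⟨hinj, hsurj⟩ := hbij
  -- f commutes with the antipodal map
  have fsig : ∀ z, f (sig z) = sig (f z) := by
    intro z
    obtain ⟨H₁, H₂, g1, g2, hz1, hz2, hs1, hs2, hpair⟩ := horiz_pair_witness z
    have hfin : (f '' H₁ ∩ f '' H₂).Finite := by
      rw [← Set.image_inter hinj, hpair]
      apply Set.Finite.image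
      exact (Set.finite_singleton _).insert _
    have hne : f z ≠ f (sig z) := by
      intro h
      exact (sig_ne z) (hinj h).symm
    have hcls := fin2_class (hgeo _ g1) (hgeo _ g2)
      (Set.mem_image_of_mem f hz1) (Set.mem_image_of_mem f hz2)
      (Set.mem_image_of_mem f hs1) (Set.mem_image_of_mem f hs2)
      hne hfin
    exact Prod.ext (Subtype.ext (by rw [sig_fst]; exact hcls.1))
      (by rw [sig_snd]; exact hcls.2)
  -- vertical geodesics map to vertical geodesics
  have hvert : ∀ G : Set (S2 × ℝ), IsVerticalSphGeodesic G →
      IsVerticalSphGeodesic (f '' G) := by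
    rintro G ⟨hGgeo, pS, rfl⟩
    set x₀ : S2 × ℝ := (pS, 0) with hx0
    have hbase : ∀ z ∈ {q : S2 × ℝ | q.1 = pS},
        ((f z).1 : E3) = ((f x₀).1 : E3) ∨ ((f z).1 : E3) = -((f x₀).1 : E3) := by
      intro z hz
      have hz1 : z.1 = pS := hz
      rcases eq_or_ne z x₀ with rfl | hzx
      · left; rfl
      · have hz2 : (0:ℝ) ≠ z.2 := by
          intro h0
          exact hzx (Prod.ext hz1 h0.symm)
        obtain ⟨G₁, G₂, g1, g2, gne, m1a, m2a, m1b, m2b, gdisj⟩ :=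
          vert_pair_witness pS hz2
        have hzeq : z = ((pS, z.2) : S2 × ℝ) := Prod.ext hz1 rfl
        have hy1 : z ∈ G₁ := by rw [hzeq]; exact m1b
        have hy2 : z ∈ G₂ := by rw [hzeq]; exact m2b
        have hxy : f x₀ ≠ f z := by
          intro h; exact hzx (hinj h).symm
        have hKne : f '' G₁ ≠ f '' G₂ := by
          intro h; exact gne (Set.image_injective.mpr hinj h)
        have hdisj : (f '' G₁) ∩ (sig '' (f '' G₂)) = ∅ := by
          have hcomm : sig '' (f '' G₂) = f '' (sig '' G₂) := by
            rw [← Set.image_comp, ← Set.image_comp]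
            apply Set.image_congr'
            intro a
            exact (fsig a).symm
          rw [hcomm, ← Set.image_inter hinj, gdisj, Set.image_empty]
        have := sba_class (hgeo _ g1) (hgeo _ g2)
          (Set.mem_image_of_mem f m1a) (Set.mem_image_of_mem f hy1)
          (Set.mem_image_of_mem f m2a) (Set.mem_image_of_mem f hy2)
          hxy hKne hdisj
        exact this
    have hall : ∀ q ∈ f '' {q : S2 × ℝ | q.1 = pS},
        (q.1 : E3) = ((f x₀).1 : E3) ∨ (q.1 : E3) = -((f x₀).1 : E3) := by
      rintro q ⟨z, hz, rfl⟩
      exact hbase z hz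
    obtain ⟨phat, heq⟩ := two_lines_vert (hgeo _ hGgeo) hall
    exact ⟨hgeo _ hGgeo, phat, heq⟩
  -- horizontal geodesics map to horizontal geodesics
  have hhoriz : ∀ G : Set (S2 × ℝ), IsHorizontalSphGeodesic G →
      IsHorizontalSphGeodesic (f '' G) := by
    rintro G ⟨hGgeo, r, hsub⟩
    obtain ⟨z, hz, hsz⟩ := horiz_antipair hGgeo hsub
    refine ⟨hgeo _ hGgeo, (f z).2, ?_⟩
    have h1 : f (sig z) ∈ f '' G := Set.mem_image_of_mem f hsz
    rw [fsig z] at h1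
    exact antipair_level (hgeo _ hGgeo) (Set.mem_image_of_mem f hz) h1
  refine ⟨hhoriz, hvert, ?_⟩
  -- slant geodesics map to slant geodesics
  rintro G ⟨hGgeo, hGh, hGv⟩
  refine ⟨hgeo _ hGgeo, ?_, ?_⟩
  · -- image not horizontal
    rintro ⟨-, r, hsub⟩
    rcases normal_form hGgeo with ⟨p, w, k, c, hON, hGeq⟩ | ⟨p, hp, hGeq⟩
    swap
    · refine hGv ⟨hGgeo, ⟨p, mem_S2 hp⟩, ?_⟩
      rw [hGeq]
      exact (vert_set_eq ⟨p, mem_S2 hp⟩).symm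
    have hk : k ≠ 0 := by
      rintro rfl
      refine hGh ⟨hGgeo, c, ?_⟩
      rw [hGeq]
      intro q hq
      exact helS_level hq
    subst hGeq
    set K := VertS p with hKdef
    have hKgeo : IsSphGeodesic K := vertS_isGeodesic hON.1
    have hKvert : IsVerticalSphGeodesic K :=
      ⟨hKgeo, ⟨p, mem_S2 hON.1⟩, (vert_set_eq ⟨p, mem_S2 hON.1⟩).symm⟩
    obtain ⟨hfKgeo, phat, hfK⟩ := hvert K hKvert
    set x₀ := helPt hON k c 0 with hx₀
    have hx₀G : x₀ ∈ HelS p w k c := helPt_mem hON k c 0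
    have hx₀K : x₀ ∈ K := by
      show ((x₀.1 : S2) : E3) = p
      rw [hx₀]
      show (Pt p w 0 : E3) = p
      exact Pt_zero
    have hinf : (HelS p w k c ∩ K).Infinite := by
      apply Set.infinite_of_injective_forall_mem
        (f := fun j : ℤ => ((x₀.1, x₀.2 + k*(j*(2*Real.pi))) : S2 × ℝ))
      · intro a b hab
        have := congrArg Prod.snd hab
        simp only at this
        have h2pi : (2*Real.pi) ≠ 0 := by positivity
        have : (a:ℝ) = b := by
          have h3 : k*((a:ℝ)*(2*Real.pi)) = k*((b:ℝ)*(2*Real.pi)) := by linarith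
          have h4 := mul_left_cancel₀ hk h3
          exact mul_right_cancel₀ h2pi h4
        exact_mod_cast this
      · intro j
        refine ⟨hel_line_mem hx₀G j, hx₀K⟩
    have hTinf : (f '' (HelS p w k c ∩ K)).Infinite :=
      Set.Infinite.image (Set.injOn_of_injective hinj) hinf
    apply hTinf
    apply Set.Finite.subset (Set.finite_singleton ((phat, r) : S2 × ℝ))
    rintro q ⟨zq, ⟨hzG, hzK⟩, rfl⟩
    have hq1 : (f zq).1 = phat := by
      have hmem : f zq ∈ f '' K := Set.mem_image_of_mem f hzK
      rw [hfK] at hmem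
      exact hmem
    have hq2 : (f zq).2 = r := hsub (Set.mem_image_of_mem f hzG)
    show f zq ∈ ({((phat, r) : S2 × ℝ)} : Set (S2 × ℝ))
    rw [Set.mem_singleton_iff]
    exact Prod.ext hq1 hq2
  · -- image not vertical
    rintro ⟨-, p₀, hfG⟩
    have hmem : ((p₀, 0) : S2 × ℝ) ∈ f '' G := by rw [hfG]; exact rfl
    obtain ⟨s₀, hs₀G, hfs₀⟩ := hmem
    have hV₀ : IsVerticalSphGeodesic {q : S2 × ℝ | q.1 = s₀.1} := by
      refine ⟨?_, s₀.1, rfl⟩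
      rw [vert_set_eq]
      exact vertS_isGeodesic (norm_S2 s₀.1)
    obtain ⟨hgeoV, p₁, hfV⟩ := hvert _ hV₀
    have hp10 : p₁ = p₀ := by
      have hmem2 : f s₀ ∈ f '' {q : S2 × ℝ | q.1 = s₀.1} :=
        Set.mem_image_of_mem f rfl
      rw [hfV] at hmem2
      have h2 : (f s₀).1 = p₁ := hmem2
      rw [hfs₀] at h2
      exact h2.symm
    have himeq : f '' {q : S2 × ℝ | q.1 = s₀.1} = f '' G := by
      rw [hfV, hp10, ← hfG]
    have hGeq : {q : S2 × ℝ | q.1 = s₀.1} = G := Set.image_injective.mpr hinj himeq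
    exact hGv ⟨hGgeo, s₀.1, hGeq.symm⟩
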